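/- Let p be a prime with 2t ≡ 1 (mod p), and write 2t = Σ e_j p^j in base p with e_0 = 1. Suppose that for every odd i with 1 < i < 2t such that i ≢ 1 (mod n) (where n is an odd integer coprime to 2p, n ≥ 5, n dividing t-1), the binomial coefficient C(2t, i) ≡ 0 (mod p). Then 2t = 1 + p^s for some s > 0. -/

import Mathlib

open Nat Finset

private lemma digit_lt {p a c j m : ℕ} (hp : 0 < p) (hm : m < j) :
    (a + c * p ^ j) / p ^ m % p = a / p ^ m % p := by
  have hj : j = (j - m - 1) + 1 + m := by omega
  rw [hj, pow_add, pow_add, pow_one, ← mul_assoc, ← mul_assoc,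
    Nat.add_mul_div_right _ _ (pow_pos hp m), Nat.add_mul_mod_self_right]

private lemma digit_eq {p a c j : ℕ} (hp : 0 < p) (ha : a < p ^ j) (hc : c < p) :
    (a + c * p ^ j) / p ^ j % p = c := by
  rw [Nat.add_mul_div_right _ _ (pow_pos hp j), Nat.div_eq_of_lt ha, zero_add,
    Nat.mod_eq_of_lt hc]

private lemma digit_gt {p x m : ℕ} (hx : x < p ^ m) : x / p ^ m % p = 0 := by
  rw [Nat.div_eq_of_lt hx, Nat.zero_mod]

private lemma eq_zero_of_digits_zero {p : ℕ} (hp : 2 ≤ p) {x : ℕ}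
    (h : ∀ m, x / p ^ m % p = 0) : x = 0 := by
  by_contra hx
  have h1 : p ^ Nat.log p x ≤ x := Nat.pow_log_le_self p hx
  have h2 : x < p ^ (Nat.log p x + 1) := Nat.lt_pow_succ_log_self hp x
  have h3 := h (Nat.log p x)
  have hd1 : 1 ≤ x / p ^ Nat.log p x :=
    (Nat.one_le_div_iff (pow_pos (by omega) _)).2 h1
  have hd2 : x / p ^ Nat.log p x < p := by
    apply (Nat.div_lt_iff_lt_mul (pow_pos (by omega : 0 < p) _)).2
    rw [mul_comm, ← pow_succ]
    exact h2
  rw [Nat.mod_eq_of_lt hd2] at h3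
  omega

private lemma eq_of_digits_eq {p : ℕ} (hp : 2 ≤ p) :
    ∀ x y : ℕ, (∀ m, x / p ^ m % p = y / p ^ m % p) → x = y := by
  intro x
  induction x using Nat.strong_induction_on with
  | _ x ih =>
    intro y h
    rcases Nat.eq_zero_or_pos x with hx | hx
    · subst hx
      refine (eq_zero_of_digits_zero hp (fun m => ?_)).symm
      rw [← h m, Nat.zero_div, Nat.zero_mod]
    · have hxy : x / p = y / p := by
        apply ih (x / p) (Nat.div_lt_self hx (by omega))
        intro m
        rw [Nat.div_div_eq_div_mul, Nat.div_div_eq_div_mul, ← pow_succ']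
        exact h (m + 1)
      have h0 : x % p = y % p := by
        have := h 0
        simpa using this
      have e1 := Nat.div_add_mod x p
      have e2 := Nat.div_add_mod y p
      rw [← e1, ← e2, hxy, h0]

private lemma not_dvd_choose {p N i : ℕ} (hp : p.Prime) (hiN : i ≤ N)
    (h : ∀ m, i / p ^ m % p ≤ N / p ^ m % p) : ¬ p ∣ Nat.choose N i := by
  haveI : Fact p.Prime := ⟨hp⟩
  intro hdvd
  have hlt : N < p ^ N := Nat.lt_pow_self hp.one_lt
  have hmod := Choose.choose_modEq_prod_range_choose_nat (p := p) (n := N) (k := i)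
    hlt (lt_of_le_of_lt hiN hlt)
  have hdvd2 : p ∣ ∏ m ∈ range N, Nat.choose (N / p ^ m % p) (i / p ^ m % p) :=
    Nat.modEq_zero_iff_dvd.1 ((Nat.modEq_zero_iff_dvd.2 hdvd).symm.trans hmod).symm
  obtain ⟨m, hm, hdm⟩ := (Prime.dvd_finset_prod_iff hp.prime _).1 hdvd2
  have hba : i / p ^ m % p ≤ N / p ^ m % p := h m
  have hfac := Nat.choose_mul_factorial_mul_factorial hba
  have hdf : p ∣ (N / p ^ m % p).factorial := by
    rw [← hfac]
    exact (hdm.mul_right _).mul_right _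
  have h1 : p ≤ N / p ^ m % p := (Nat.Prime.dvd_factorial hp).1 hdf
  have h2 : N / p ^ m % p < p := Nat.mod_lt _ hp.pos
  omega

/-- If `p` is prime, `2t ≡ 1 (mod p)`, `n ≥ 5` is odd, coprime to `2p`, divides `t-1`, and
`C(2t, i) ≡ 0 (mod p)` for every odd `i` with `1 < i < 2t` and `i ≢ 1 (mod n)`, then
`2t = 1 + p^s` for some `s > 0`. -/
theorem stmt_9 (p t n : ℕ) (hp : p.Prime) (hmod : 2 * t ≡ 1 [MOD p])
    (hn5 : 5 ≤ n) (hnodd : Odd n) (hnp : ¬ p ∣ n) (hnt : n ∣ t - 1)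
    (hbin : ∀ i : ℕ, Odd i → 1 < i → i < 2 * t → ¬ i ≡ 1 [MOD n] →
      p ∣ Nat.choose (2 * t) i) :
    ∃ s : ℕ, 0 < s ∧ 2 * t = 1 + p ^ s := by
  set N := 2 * t with hN
  have hp2 : 2 ≤ p := hp.two_le
  have hNp : N % p = 1 := by
    have h1 := hmod
    rwa [Nat.ModEq, Nat.mod_eq_of_lt (by omega : (1:ℕ) < p)] at h1
  have hpodd : Odd p := by
    refine hp.odd_of_ne_two ?_
    rintro rfl
    have : N % 2 = 0 := by omega
    omega
  have hp3 : 3 ≤ p := by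
    obtain ⟨k, hk⟩ := hpodd
    omega
  have hpodd' : Odd p := hp.odd_of_ne_two (by omega)
  have hN2 : N % 2 = 0 := by omega
  have key : ∀ i, Odd i → 1 < i → i < N → (∀ m, i / p ^ m % p ≤ N / p ^ m % p) →
      i ≡ 1 [MOD n] := by
    intro i h1 h2 h3 h4
    by_contra hc
    exact not_dvd_choose hp (le_of_lt h3) h4 (hbin i h1 h2 h3 hc)
  have hcopn : ∀ j : ℕ, ¬ n ∣ 2 * p ^ j := by
    intro j hdvd
    have hc2 : Nat.Coprime n 2 := Nat.coprime_two_right.mpr hnodd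
    have hcp : Nat.Coprime n p := (hp.coprime_iff_not_dvd.mpr hnp).symm
    have hc : Nat.Coprime n (2 * p ^ j) := Nat.Coprime.mul_right hc2 (hcp.pow_right j)
    have := hc.eq_one_of_dvd hdvd
    omega
  -- Step 1: every digit with index ≥ 1 is at most 1
  have step1 : ∀ j, 1 ≤ j → N / p ^ j % p ≤ 1 := by
    intro j hj
    by_contra hcon
    push_neg at hcon
    have hpj3 : 3 ≤ p ^ j := le_trans hp3 (Nat.le_self_pow (by omega) p)
    have hpj2 : p ^ j % 2 = 1 := Nat.odd_iff.1 (hpodd'.pow)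
    have hle : 1 + 2 * p ^ j ≤ N := by
      have h1 : N % p ^ j + p ^ j * (N / p ^ j) = N := Nat.mod_add_div _ _
      have hml := Nat.mod_le (N / p ^ j) p
      have h2 : 2 ≤ N / p ^ j := by omega
      have h3 : N % p ≤ N % p ^ j := by
        conv_lhs => rw [← Nat.mod_mod_of_dvd N (dvd_pow_self p (by omega : j ≠ 0))]
        exact Nat.mod_le _ _
      have h4 : p ^ j * 2 ≤ p ^ j * (N / p ^ j) := Nat.mul_le_mul le_rfl h2
      linarith [hNp]
    have hlt : 1 + 2 * p ^ j < N := by omega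
    have hdig : ∀ m, (1 + 2 * p ^ j) / p ^ m % p ≤ N / p ^ m % p := by
      intro m
      rcases lt_trichotomy m j with hm | hm | hm
      · rw [digit_lt (by omega) hm]
        rcases Nat.eq_zero_or_pos m with h0 | h0
        · subst h0
          simp only [pow_zero, Nat.div_one]
          rw [Nat.mod_eq_of_lt (by omega : (1:ℕ) < p), hNp]
        · have hm2 : (1:ℕ) < p ^ m := Nat.one_lt_pow (by omega) (by omega)
          rw [Nat.div_eq_of_lt hm2]
          simp
      · subst hm
        rw [digit_eq (by omega) (by omega : 1 < p ^ m) (by omega : 2 < p)]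
        omega
      · have hb : p ^ (j + 1) ≤ p ^ m := Nat.pow_le_pow_right (by omega) (by omega)
        have hb2 : p ^ (j + 1) = p * p ^ j := pow_succ' p j
        have hb3 : 3 * p ^ j ≤ p * p ^ j := Nat.mul_le_mul hp3 le_rfl
        rw [digit_gt (show 1 + 2 * p ^ j < p ^ m by linarith)]
        omega
    have hkey := key (1 + 2 * p ^ j) ⟨p ^ j, by ring⟩ (by omega) hlt hdig
    have hdvd := (Nat.modEq_iff_dvd' (by omega : 1 ≤ 1 + 2 * p ^ j)).1 hkey.symm
    rw [show 1 + 2 * p ^ j - 1 = 2 * p ^ j by omega] at hdvd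
    exact hcopn j hdvd
  -- Step 2: at most one digit with index ≥ 1 equals 1
  have step2 : ∀ j k, 1 ≤ j → j < k → N / p ^ j % p = 1 → N / p ^ k % p = 1 → False := by
    intro j k hj hjk hej hek
    have hpj3 : 3 ≤ p ^ j := le_trans hp3 (Nat.le_self_pow (by omega) p)
    have hpk3 : 3 ≤ p ^ k := le_trans hp3 (Nat.le_self_pow (by omega) p)
    have hpj2 : p ^ j % 2 = 1 := Nat.odd_iff.1 (hpodd'.pow)
    have hpk2 : p ^ k % 2 = 1 := Nat.odd_iff.1 (hpodd'.pow)
    have hpjk : p ^ j < p ^ k := Nat.pow_lt_pow_right (by omega) hjk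
    have haux : p * p ^ j ≤ p ^ k := by
      rw [← pow_succ']
      exact Nat.pow_le_pow_right (by omega) (by omega)
    have haux3 : 3 * p ^ j ≤ p * p ^ j := Nat.mul_le_mul hp3 le_rfl
    have hauxk : p * p ^ k ≤ p ^ (k + 1) := le_of_eq (pow_succ' p k).symm
    have hauxk3 : 3 * p ^ k ≤ p * p ^ k := Nat.mul_le_mul hp3 le_rfl
    have ha : 1 + p ^ j < p ^ k := by linarith
    -- generic: digit of a pure power
    have hpow_dig : ∀ l, 1 ≤ l → N / p ^ l % p = 1 → 3 ≤ p ^ l →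
        (∀ m, p ^ l / p ^ m % p ≤ N / p ^ m % p) ∧ p ^ l < N := by
      intro l hl hel hpl3
      constructor
      · intro m
        rcases lt_trichotomy m l with hm | hm | hm
        · rw [show p ^ l = 0 + 1 * p ^ l by ring, digit_lt (by omega) hm]
          simp
        · subst hm
          rw [Nat.div_self (pow_pos (by omega : 0 < p) m),
            Nat.mod_eq_of_lt (by omega : 1 < p)]
          omega
        · rw [digit_gt (Nat.pow_lt_pow_right (by omega) hm)]
          omega
      · have h1 : N % p ^ l + p ^ l * (N / p ^ l) = N := Nat.mod_add_div _ _
        have hml := Nat.mod_le (N / p ^ l) p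
        have h2 : 1 ≤ N / p ^ l := by omega
        have h4 : p ^ l ≤ p ^ l * (N / p ^ l) := Nat.le_mul_of_pos_right _ (by omega)
        have h5 : 0 ≤ N % p ^ l := Nat.zero_le _
        have hle : p ^ l ≤ N := by linarith
        have hpl2 : p ^ l % 2 = 1 := Nat.odd_iff.1 (hpodd'.pow)
        omega
    obtain ⟨hdigj, hltj⟩ := hpow_dig j hj hej hpj3
    obtain ⟨hdigk, hltk⟩ := hpow_dig k (by omega) hek hpk3
    have h1 := key (p ^ j) hpodd'.pow (by omega) hltj hdigj
    have h2 := key (p ^ k) hpodd'.pow (by omega) hltk hdigk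
    -- the third element 1 + p^j + p^k
    have hi3 : 1 + p ^ j + p ^ k = (1 + p ^ j) + 1 * p ^ k := by ring
    have hdig3 : ∀ m, (1 + p ^ j + p ^ k) / p ^ m % p ≤ N / p ^ m % p := by
      intro m
      rcases lt_trichotomy m k with hm | hm | hm
      · rw [hi3, digit_lt (by omega) hm]
        rcases lt_trichotomy m j with hm' | hm' | hm'
        · rw [show 1 + p ^ j = 1 + 1 * p ^ j by ring, digit_lt (by omega) hm']
          rcases Nat.eq_zero_or_pos m with h0 | h0
          · subst h0
            simp only [pow_zero, Nat.div_one]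
            rw [Nat.mod_eq_of_lt (by omega : (1:ℕ) < p), hNp]
          · have hm2 : (1:ℕ) < p ^ m := Nat.one_lt_pow (by omega) (by omega)
            rw [Nat.div_eq_of_lt hm2]
            simp
        · subst hm'
          rw [show 1 + p ^ m = 1 + 1 * p ^ m by ring,
            digit_eq (by omega) (by omega : 1 < p ^ m) (by omega : 1 < p)]
          omega
        · have hb : p ^ (j + 1) ≤ p ^ m := Nat.pow_le_pow_right (by omega) (by omega)
          have hb2 : p ^ (j + 1) = p * p ^ j := pow_succ' p j
          rw [digit_gt (show 1 + p ^ j < p ^ m by linarith)]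
          omega
      · subst hm
        rw [hi3, digit_eq (by omega) ha (by omega : 1 < p)]
        omega
      · have hb : p ^ (k + 1) ≤ p ^ m := Nat.pow_le_pow_right (by omega) (by omega)
        rw [digit_gt (show 1 + p ^ j + p ^ k < p ^ m by linarith)]
        omega
    have hle3 : 1 + p ^ j + p ^ k ≤ N := by
      have hMp : N % p ^ k % p = 1 := by
        rw [Nat.mod_mod_of_dvd N (dvd_pow_self p (by omega : k ≠ 0))]
        exact hNp
      have hMj : N % p ^ k / p ^ j % p = 1 := by
        have e1 : N / p ^ j % p = N % (p ^ j * p) / p ^ j :=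
          (Nat.mod_mul_right_div_self N (p ^ j) p).symm
        have e2 : N % p ^ k / p ^ j % p = N % p ^ k % (p ^ j * p) / p ^ j :=
          (Nat.mod_mul_right_div_self (N % p ^ k) (p ^ j) p).symm
        have e3 : N % p ^ k % (p ^ j * p) = N % (p ^ j * p) :=
          Nat.mod_mod_of_dvd N (by
            rw [← pow_succ]
            exact pow_dvd_pow p (by omega))
        rw [e2, e3, ← e1]
        exact hej
      have m1 : N % p ^ k % p ^ j + p ^ j * (N % p ^ k / p ^ j) = N % p ^ k :=
        Nat.mod_add_div _ _
      have m2 : N % p ^ k / p ^ j % p ≤ N % p ^ k / p ^ j := Nat.mod_le _ _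
      have m4 : p ^ j ≤ p ^ j * (N % p ^ k / p ^ j) := Nat.le_mul_of_pos_right _ (by omega)
      have m3 : N % p ^ k % p ≤ N % p ^ k % p ^ j := by
        conv_lhs => rw [← Nat.mod_mod_of_dvd (N % p ^ k) (dvd_pow_self p (by omega : j ≠ 0))]
        exact Nat.mod_le _ _
      have hMge : p ^ j + 1 ≤ N % p ^ k := by linarith
      have n1 : N % p ^ k + p ^ k * (N / p ^ k) = N := Nat.mod_add_div _ _
      have n2 : N / p ^ k % p ≤ N / p ^ k := Nat.mod_le _ _
      have n4 : p ^ k ≤ p ^ k * (N / p ^ k) := Nat.le_mul_of_pos_right _ (by omega)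
      linarith
    have hlt3 : 1 + p ^ j + p ^ k < N := by omega
    have h3 := key (1 + p ^ j + p ^ k) (Nat.odd_iff.2 (by omega)) (by omega) hlt3 hdig3
    have hsum : 1 + p ^ j + p ^ k ≡ 1 + 1 + 1 [MOD n] :=
      ((Nat.ModEq.refl 1).add h1).add h2
    have h13 : (1:ℕ) ≡ 1 + 1 + 1 [MOD n] := h3.symm.trans hsum
    have hdvd2 : n ∣ 2 := by
      have := (Nat.modEq_iff_dvd' (by omega : (1:ℕ) ≤ 1 + 1 + 1)).1 h13
      simpa using this
    have := Nat.le_of_dvd (by omega) hdvd2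
    omega
  -- Step 3: there is a digit equal to 1 at some index s ≥ 1
  have hex : ∃ s, 1 ≤ s ∧ N / p ^ s % p ≠ 0 := by
    by_contra hcon
    push_neg at hcon
    have hdiv : N / p = 0 := by
      apply eq_zero_of_digits_zero hp2
      intro m
      rw [Nat.div_div_eq_div_mul, ← _root_.pow_succ']
      exact hcon (m + 1) (by omega)
    have hNlt : N < p := (Nat.div_eq_zero_iff.1 hdiv).resolve_left (by omega)
    have : N % p = N := Nat.mod_eq_of_lt hNlt
    omega
  obtain ⟨s, hs1, hs2⟩ := hex
  have hes : N / p ^ s % p = 1 := by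
    have := step1 s hs1
    omega
  have huniq : ∀ m, 1 ≤ m → m ≠ s → N / p ^ m % p = 0 := by
    intro m hm hms
    by_contra hc
    have hem : N / p ^ m % p = 1 := by
      have := step1 m hm
      omega
    rcases lt_or_gt_of_ne hms with h | h
    · exact step2 m s hm h hem hes
    · exact step2 s m hs1 h hes hem
  have hps3 : 3 ≤ p ^ s := le_trans hp3 (Nat.le_self_pow (by omega) p)
  have hfin : ∀ m, N / p ^ m % p = (1 + p ^ s) / p ^ m % p := by
    intro m
    rcases lt_trichotomy m s with hm | hm | hm
    · rw [show 1 + p ^ s = 1 + 1 * p ^ s by ring, digit_lt (by omega) hm]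
      rcases Nat.eq_zero_or_pos m with h0 | h0
      · subst h0
        simp only [pow_zero, Nat.div_one]
        rw [Nat.mod_eq_of_lt (by omega : (1:ℕ) < p), hNp]
      · have hm2 : (1:ℕ) < p ^ m := Nat.one_lt_pow (by omega) (by omega)
        rw [Nat.div_eq_of_lt hm2, Nat.zero_mod, huniq m h0 (by omega)]
    · subst hm
      rw [show 1 + p ^ m = 1 + 1 * p ^ m by ring,
        digit_eq (by omega) (by omega : 1 < p ^ m) (by omega : 1 < p)]
      exact hes
    · have hb : p ^ (s + 1) ≤ p ^ m := Nat.pow_le_pow_right (by omega) (by omega)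
      have hb2 : p ^ (s + 1) = p * p ^ s := pow_succ' p s
      have hb3 : 3 * p ^ s ≤ p * p ^ s := Nat.mul_le_mul hp3 le_rfl
      rw [digit_gt (show 1 + p ^ s < p ^ m by linarith), huniq m (by omega) (by omega)]
  exact ⟨s, by omega, eq_of_digits_eq hp2 N (1 + p ^ s) hfin⟩
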